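/- arXiv:2103.00750 — 2 statements merged into one kernel-verified Lean document; each statement's English description precedes it below -/
import Mathlib

section
/- Projection onto the PSD cone via eigenvalue clipping: if P = R diag(λ) Rᵀ with R orthogonal, then P⁺ := R diag(max(0, λ)) Rᵀ minimizes the Frobenius distance ‖P − X‖_F over all symmetric positive semidefinite matrices X. -/
open Matrix

lemma frob_eq_trace {n : Type*} [Fintype n] (M : Matrix n n ℝ) :
    ∑ i, ∑ j, (M i j)^2 = (Mᵀ * M).trace := by
  rw [Finset.sum_comm]
  simp [Matrix.trace, Matrix.mul_apply, Matrix.diag, sq]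

lemma trace_conj {n : Type*} [Fintype n] [DecidableEq n] (R A : Matrix n n ℝ)
    (h2 : R * Rᵀ = 1) :
    ((Rᵀ*A*R)ᵀ * (Rᵀ*A*R)).trace = (Aᵀ*A).trace := by
  have h : (Rᵀ*A*R)ᵀ * (Rᵀ*A*R) = Rᵀ * (Aᵀ*A) * R := by
    simp only [Matrix.transpose_mul, Matrix.transpose_transpose, Matrix.mul_assoc]
    rw [← Matrix.mul_assoc R Rᵀ, h2, Matrix.one_mul]
  rw [h, Matrix.trace_mul_cycle, h2, Matrix.one_mul]

theorem psd_projection_eigen_clip {n : Type*} [Fintype n] [DecidableEq n]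
    (P R : Matrix n n ℝ) (l : n → ℝ)
    (hP : P.IsSymm) (hR : Rᵀ * R = 1)
    (hdecomp : P = R * Matrix.diagonal l * Rᵀ) :
    ∀ X : Matrix n n ℝ, X.IsSymm → X.PosSemidef →
      Real.sqrt (∑ i, ∑ j, ((P - R * Matrix.diagonal (fun i => max 0 (l i)) * Rᵀ) i j) ^ 2)
        ≤ Real.sqrt (∑ i, ∑ j, ((P - X) i j) ^ 2) := by
  intro X hXs hX
  have hRR : R * Rᵀ = 1 := mul_eq_one_comm.mp hR
  set D : Matrix n n ℝ := Matrix.diagonal l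
  set D' : Matrix n n ℝ := Matrix.diagonal (fun i => max 0 (l i))
  set Y : Matrix n n ℝ := Rᵀ * X * R with hY
  -- conjugate identities
  have key : ∀ A : Matrix n n ℝ, ∑ i, ∑ j, (A i j)^2 = ∑ i, ∑ j, ((Rᵀ*A*R) i j)^2 := by
    intro A
    rw [frob_eq_trace, frob_eq_trace, trace_conj R A hRR]
  have hc1 : Rᵀ * (P - R * D' * Rᵀ) * R = D - D' := by
    rw [hdecomp]
    simp only [Matrix.mul_sub, Matrix.sub_mul, Matrix.mul_assoc]
    rw [← Matrix.mul_assoc Rᵀ R, hR, Matrix.one_mul, ← Matrix.mul_assoc Rᵀ R, hR,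
      Matrix.one_mul]
    simp
  have hc2 : Rᵀ * (P - X) * R = D - Y := by
    rw [hdecomp]
    simp only [Matrix.mul_sub, Matrix.sub_mul, Matrix.mul_assoc, hY]
    rw [← Matrix.mul_assoc Rᵀ R, hR, Matrix.one_mul]
    simp [Matrix.mul_assoc]
  -- Y is PSD
  have hYpsd : Y.PosSemidef := by
    have : (Rᵀ * X * (Rᵀ)ᴴ).PosSemidef := hX.mul_mul_conjTranspose_same Rᵀ
    rw [Matrix.conjTranspose_eq_transpose_of_trivial, Matrix.transpose_transpose] at this
    exact this
  have hYdiag : ∀ i, 0 ≤ Y i i := by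
    intro i
    exact hYpsd.diag_nonneg
  -- pointwise inequality
  have hpt : ∀ i, (l i - max 0 (l i))^2 ≤ (l i - Y i i)^2 := by
    intro i
    rcases le_total 0 (l i) with h | h
    · rw [max_eq_right h]; simpa using sq_nonneg (l i - Y i i)
    · rw [max_eq_left h]
      have := hYdiag i
      nlinarith
  apply Real.sqrt_le_sqrt
  rw [key (P - R * D' * Rᵀ), key (P - X), hc1, hc2]
  have lhs_eq : ∑ i, ∑ j, ((D - D') i j)^2 = ∑ i, (l i - max 0 (l i))^2 := by
    refine Finset.sum_congr rfl fun i _ => ?_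
    rw [Finset.sum_eq_single i]
    · simp [D, D', Matrix.diagonal_apply_eq, Matrix.sub_apply]
    · intro j _ hji
      simp [D, D', Matrix.sub_apply, Matrix.diagonal_apply_ne' _ hji]
    · simp
  rw [lhs_eq]
  calc ∑ i, (l i - max 0 (l i))^2 ≤ ∑ i, ((D - Y) i i)^2 := by
        refine Finset.sum_le_sum fun i _ => ?_
        simpa [D, Matrix.sub_apply] using hpt i
    _ ≤ ∑ i, ∑ j, ((D - Y) i j)^2 := by
        refine Finset.sum_le_sum fun i _ => ?_
        exact Finset.single_le_sum (f := fun j => ((D - Y) i j)^2) (fun j _ => sq_nonneg _) (Finset.mem_univ i)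
end

section
/- If M := sym(XA + YC) := (XA + YC) + (XA + YC)ᵀ is negative definite for some symmetric positive definite X, then A + X⁻¹Y C is a Hurwitz matrix (all eigenvalues have negative real part). -/
open Matrix

private lemma aux_re_quad {n : Type*} [Fintype n] (P : Matrix n n ℝ) (v : n → ℂ) :
    (star v ⬝ᵥ (P.map Complex.ofReal).mulVec v).re
      = (fun i => (v i).re) ⬝ᵥ P.mulVec (fun i => (v i).re)
        + (fun i => (v i).im) ⬝ᵥ P.mulVec (fun i => (v i).im) := by
  simp only [dotProduct, mulVec, Pi.star_apply, Matrix.map_apply, Complex.re_sum]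
  rw [← Finset.sum_add_distrib]
  refine Finset.sum_congr rfl fun i _ => ?_
  rw [Finset.mul_sum, Complex.re_sum, Finset.mul_sum, Finset.mul_sum, ← Finset.sum_add_distrib]
  refine Finset.sum_congr rfl fun j _ => ?_
  simp [Complex.mul_re, Complex.mul_im]

theorem hurwitz_of_lyapunov_lmi {n m : Type*} [Fintype n] [Fintype m]
    [DecidableEq n] [DecidableEq m]
    (A : Matrix n n ℝ) (C : Matrix m n ℝ) (X : Matrix n n ℝ) (Y : Matrix n m ℝ)
    (hX : X.PosDef)
    (hM : ∀ x : n → ℝ, x ≠ 0 →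
      x ⬝ᵥ (((X * A + Y * C) + (X * A + Y * C)ᵀ).mulVec x) < 0) :
    ∀ μ : ℂ, μ ∈ spectrum ℂ ((A + (X⁻¹ * Y) * C).map (Complex.ofReal)) → μ.re < 0 := by
  intro μ hμ
  set B : Matrix n n ℝ := A + (X⁻¹ * Y) * C with hBdef
  set M : Matrix n n ℝ := (X * A + Y * C) + (X * A + Y * C)ᵀ with hMdef
  have hXd : IsUnit X.det := isUnit_iff_ne_zero.mpr hX.det_pos.ne'
  -- real Lyapunov identity
  have hXB : X * B = X * A + Y * C := by
    rw [hBdef, Matrix.mul_add, ← Matrix.mul_assoc, ← Matrix.mul_assoc,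
      Matrix.mul_nonsing_inv X hXd, Matrix.one_mul]
  have hXsymm : Xᵀ = X := hX.1
  have hReal : M = X * B + Bᵀ * X := by
    rw [hMdef, ← hXB, Matrix.transpose_mul, hXsymm]
  -- complexification
  set Bc := B.map Complex.ofReal with hBc
  set Xc := X.map Complex.ofReal with hXc
  have hXe : ∀ i j, X i j = X j i := fun i j => by
    conv_lhs => rw [← hXsymm]
    rfl
  have hXcH : Xcᴴ = Xc := by
    ext i j
    simp [hXc, conjTranspose_apply, Matrix.map_apply, Complex.conj_ofReal, hXe i j]
  have hBcH : Bcᴴ = Bᵀ.map Complex.ofReal := by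
    ext i j
    simp [hBc, conjTranspose_apply, Matrix.map_apply, Complex.conj_ofReal, Matrix.transpose_apply]
  have key : M.map Complex.ofReal = Xc * Bc + Bcᴴ * Xc := by
    rw [hReal, hBcH, hXc, hBc]
    ext i j
    simp only [Matrix.add_apply, Matrix.mul_apply, Matrix.map_apply]
    push_cast
    ring
  -- eigenvector
  rw [← AlgEquiv.spectrum_eq (Matrix.toLinAlgEquiv (Pi.basisFun ℂ n))] at hμ
  obtain ⟨v, hv⟩ := (Module.End.hasEigenvalue_iff_mem_spectrum.mpr hμ).exists_hasEigenvector
  have hv0 : v ≠ 0 := hv.2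
  have hvB : Bc.mulVec v = μ • v := by
    have := hv.apply_eq_smul
    rw [Matrix.toLinAlgEquiv_apply] at this
    rw [← this]
    funext i
    simp [Pi.basisFun_apply, Pi.single_apply, eq_comm, mulVec, dotProduct, Pi.basisFun_repr]
  set s : ℂ := star v ⬝ᵥ Xc.mulVec v with hs
  have h1 : star v ⬝ᵥ (Xc * Bc).mulVec v = μ * s := by
    rw [← Matrix.mulVec_mulVec, hvB, Matrix.mulVec_smul, dotProduct_smul, smul_eq_mul]
  have h2 : star v ⬝ᵥ (Bcᴴ * Xc).mulVec v = (starRingEnd ℂ) μ * s := by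
    rw [← Matrix.mulVec_mulVec, Matrix.dotProduct_mulVec, ← Matrix.star_mulVec, hvB,
      star_smul, smul_dotProduct]
    simp [smul_eq_mul, hs]
  have hq : star v ⬝ᵥ (M.map Complex.ofReal).mulVec v = (μ + (starRingEnd ℂ) μ) * s := by
    rw [key, Matrix.add_mulVec, dotProduct_add, h1, h2, add_mul]
  -- real and imaginary parts of v
  set x : n → ℝ := fun i => (v i).re with hx
  set y : n → ℝ := fun i => (v i).im with hy
  have hxy : x ≠ 0 ∨ y ≠ 0 := by
    by_contra h
    push_neg at h
    apply hv0
    funext i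
    have h1 := congrFun h.1 i
    have h2 := congrFun h.2 i
    exact Complex.ext h1 h2
  -- positivity of s.re
  have hsre : 0 < s.re := by
    rw [hs, aux_re_quad]
    have hX1 : ∀ z : n → ℝ, 0 ≤ z ⬝ᵥ X.mulVec z := fun z => by
      simpa using hX.posSemidef.dotProduct_mulVec_nonneg z
    have hX2 : ∀ z : n → ℝ, z ≠ 0 → 0 < z ⬝ᵥ X.mulVec z := fun z hz => by
      simpa using hX.dotProduct_mulVec_pos hz
    rcases hxy with h | h
    · have := hX2 x h
      have := hX1 y
      linarith
    · have := hX2 y h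
      have := hX1 x
      linarith
  -- negativity of q.re
  have hM0 : ∀ z : n → ℝ, z ⬝ᵥ M.mulVec z ≤ 0 := fun z => by
    by_cases hz : z = 0
    · simp [hz]
    · exact le_of_lt (hM z hz)
  have hqre : (star v ⬝ᵥ (M.map Complex.ofReal).mulVec v).re < 0 := by
    rw [aux_re_quad]
    rcases hxy with h | h
    · have := hM x h
      have := hM0 y
      linarith
    · have := hM y h
      have := hM0 x
      linarith
  -- combine
  rw [hq] at hqre
  have hμconj : μ + (starRingEnd ℂ) μ = ((2 * μ.re : ℝ) : ℂ) := Complex.add_conj μ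
  rw [hμconj, Complex.re_ofReal_mul] at hqre
  nlinarith
end
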